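/- (Gershgorin bound for convolutional Gram matrices.) Let D be a convolutional dictionary with mutual coherence μ(D), and let 𝒯 be a nonempty set of column indices whose ℓ_{0,∞} norm equals k, i.e. max_{i∈ℤ/Nℤ} |𝒯 ∩ S_i| = k. Let D_𝒯 be the submatrix of D consisting of the columns indexed by 𝒯 and G^𝒯 = D_𝒯ᵀ D_𝒯 its Gram matrix. Then every eigenvalue λ of G^𝒯 satisfies 1 − (k−1)·μ(D) ≤ λ ≤ 1 + (k−1)·μ(D). -/

import Mathlib

open Finset

noncomputable section

attribute [local instance] Classical.propDecidable

/-- The stripe index set `S i`: all column indices `(t, j)` whose shift position `t` lies in the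
cyclic window `{i - n + 1, …, i + n - 1}` (mod `N`). -/
def stripeSet (N n m : ℕ) [NeZero N] (i : ZMod N) : Finset (ZMod N × Fin m) :=
  Finset.univ.filter (fun a =>
    ∃ s ∈ Finset.Icc (-(n : ℤ) + 1) ((n : ℤ) - 1), a.1 = i + (s : ZMod N))

/-- The number of nonzero entries of `Γ` in the `i`-th stripe. -/
def stripeNnz (N n m : ℕ) [NeZero N] (Γ : ZMod N × Fin m → ℝ) (i : ZMod N) : ℕ :=
  ((stripeSet N n m i).filter (fun a => Γ a ≠ 0)).card

/-- The `ℓ_{0,∞}` norm of a global vector: the maximal number of nonzeros in a stripe. -/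
def l0inf (N n m : ℕ) [NeZero N] (Γ : ZMod N × Fin m → ℝ) : ℕ :=
  Finset.univ.sup (fun i : ZMod N => stripeNnz N n m Γ i)

/-- Inner product of two columns of `D`. -/
def colInner {N m : ℕ} [NeZero N] (D : Matrix (ZMod N) (ZMod N × Fin m) ℝ)
    (a b : ZMod N × Fin m) : ℝ :=
  ∑ t, D t a * D t b

/-- The mutual coherence `μ(D)`: the maximal absolute inner product between distinct columns. -/
def mutualCoherence {N m : ℕ} [NeZero N] (D : Matrix (ZMod N) (ZMod N × Fin m) ℝ) : ℝ :=
  sSup {x | ∃ a b : ZMod N × Fin m, a ≠ b ∧ x = |colInner D a b|}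

/-- `D` is a convolutional dictionary: its columns are the cyclic shifts of the columns of a
local dictionary `D_L ∈ ℝ^{n×m}`, and all columns have unit `ℓ2` norm. -/
def IsConvDict (N n m : ℕ) [NeZero N] (D : Matrix (ZMod N) (ZMod N × Fin m) ℝ) : Prop :=
  (∃ DL : Fin n → Fin m → ℝ, ∀ (i t : ZMod N) (j : Fin m),
      D t (i, j) = if h : (t - i).val < n then DL ⟨(t - i).val, h⟩ j else 0) ∧
  ∀ a : ZMod N × Fin m, ∑ t, (D t a) ^ 2 = 1

/-- The shifted mutual coherence `μ_s`: the maximal absolute inner product between a column at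
shift position `i` and a column at shift position `i + s` (distinct columns when `s = 0`). -/
def shiftedMu {N m : ℕ} [NeZero N] (D : Matrix (ZMod N) (ZMod N × Fin m) ℝ) (s : ℤ) : ℝ :=
  sSup {x | ∃ (i : ZMod N) (j l : Fin m), (s = 0 → j ≠ l) ∧
    x = |colInner D (i, j) (i + (s : ZMod N), l)|}

/-- `n_{i,s}(Γ)`: the number of nonzeros of `Γ` in the local chunk at shift `s` of the
`i`-th stripe. -/
def shiftNnz (N m : ℕ) [NeZero N] (Γ : ZMod N × Fin m → ℝ) (i : ZMod N) (s : ℤ) : ℕ :=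
  (Finset.univ.filter (fun j : Fin m => Γ (i + (s : ZMod N), j) ≠ 0)).card

/-- The stripe coherence `ζ_i(Γ) = Σ_s n_{i,s}(Γ) · μ_s`. -/
def stripeCoherence (N n m : ℕ) [NeZero N] (D : Matrix (ZMod N) (ZMod N × Fin m) ℝ)
    (Γ : ZMod N × Fin m → ℝ) (i : ZMod N) : ℝ :=
  ∑ s ∈ Finset.Icc (-(n : ℤ) + 1) ((n : ℤ) - 1), (shiftNnz N m Γ i s : ℝ) * shiftedMu D s

/-- The Stripe-Spark `σ_∞(D)`: the least `ℓ_{0,∞}` norm of a nonzero vector in the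
null space of `D` (`⊤` if the null space is trivial). -/
def stripeSpark (N n m : ℕ) [NeZero N] (D : Matrix (ZMod N) (ZMod N × Fin m) ℝ) : ℕ∞ :=
  sInf {k : ℕ∞ | ∃ Δ : ZMod N × Fin m → ℝ, Δ ≠ 0 ∧ D.mulVec Δ = 0 ∧ (l0inf N n m Δ : ℕ∞) = k}

/-- The `ℓ1` norm of a global vector. -/
def l1norm {N m : ℕ} [NeZero N] (Γ : ZMod N × Fin m → ℝ) : ℝ :=
  ∑ a, |Γ a|

lemma colInner_abs_le_one {N m : ℕ} [NeZero N] (D : Matrix (ZMod N) (ZMod N × Fin m) ℝ)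
    (hD : ∀ a, ∑ t, (D t a) ^ 2 = 1) (a b : ZMod N × Fin m) : |colInner D a b| ≤ 1 := by
  rw [← sq_le_one_iff_abs_le_one]
  have h := Finset.sum_mul_sq_le_sq_mul_sq Finset.univ (fun t => D t a) (fun t => D t b)
  calc colInner D a b ^ 2 ≤ (∑ t, (D t a) ^ 2) * ∑ t, (D t b) ^ 2 := h
    _ = 1 := by rw [hD, hD]; ring

lemma colInner_eq_zero_of_not_mem {N n m : ℕ} [NeZero N]
    (D : Matrix (ZMod N) (ZMod N × Fin m) ℝ)
    (DL : Fin n → Fin m → ℝ)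
    (hDL : ∀ (i t : ZMod N) (j : Fin m),
      D t (i, j) = if h : (t - i).val < n then DL ⟨(t - i).val, h⟩ j else 0)
    (a b : ZMod N × Fin m) (hb : b ∉ stripeSet N n m a.1) : colInner D a b = 0 := by
  unfold colInner
  apply Finset.sum_eq_zero
  intro t _
  by_contra hne
  have h1 : D t a ≠ 0 := fun h => hne (by rw [h, zero_mul])
  have h2 : D t b ≠ 0 := fun h => hne (by rw [h, mul_zero])
  rw [show a = (a.1, a.2) from rfl, hDL] at h1
  rw [show b = (b.1, b.2) from rfl, hDL] at h2
  by_cases hu : (t - a.1).val < n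
  · by_cases hu' : (t - b.1).val < n
    · apply hb
      have hmem : ∃ s ∈ Finset.Icc (-(n : ℤ) + 1) ((n : ℤ) - 1), b.1 = a.1 + (s : ZMod N) := by
        refine ⟨((t - a.1).val : ℤ) - ((t - b.1).val : ℤ), ?_, ?_⟩
        · rw [Finset.mem_Icc]
          constructor <;> omega
        · have e1 : (((t - a.1).val : ℤ) : ZMod N) = t - a.1 := by
            push_cast [ZMod.natCast_val, ZMod.cast_id]
            rfl
          have e2 : (((t - b.1).val : ℤ) : ZMod N) = t - b.1 := by
            push_cast [ZMod.natCast_val, ZMod.cast_id]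
            rfl
          push_cast [e1, e2]
          ring
      simpa [stripeSet] using hmem
    · simp [hu'] at h2
  · simp [hu] at h1

/-- Gershgorin bound for convolutional Gram matrices: if the support `T` has
`ℓ_{0,∞}` norm `k`, then every eigenvalue of the Gram matrix `D_Tᵀ D_T` lies in
`[1 - (k-1)μ(D), 1 + (k-1)μ(D)]`. -/
theorem gershgorin_conv_gram (N n m : ℕ) [NeZero N]
    (hm : 1 ≤ m) (hn : 1 ≤ n) (hN : 2 * n - 1 ≤ N)
    (D : Matrix (ZMod N) (ZMod N × Fin m) ℝ) (hD : IsConvDict N n m D)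
    (T : Finset (ZMod N × Fin m)) (hT : T.Nonempty) (k : ℕ)
    (hk : Finset.univ.sup (fun i : ZMod N => (T ∩ stripeSet N n m i).card) = k)
    (lam : ℝ) (v : {a // a ∈ T} → ℝ) (hv : v ≠ 0)
    (heig : Matrix.mulVec (Matrix.of fun a b : {a // a ∈ T} => colInner D a.1 b.1) v = lam • v) :
    1 - ((k : ℝ) - 1) * mutualCoherence D ≤ lam ∧
      lam ≤ 1 + ((k : ℝ) - 1) * mutualCoherence D := by
  classical
  obtain ⟨⟨DL, hDL⟩, hnorm⟩ := hD
  set μ := mutualCoherence D with hμdef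
  have hbdd : BddAbove {x | ∃ a b : ZMod N × Fin m, a ≠ b ∧ x = |colInner D a b|} := by
    refine ⟨1, ?_⟩
    rintro x ⟨a, b, -, rfl⟩
    exact colInner_abs_le_one D hnorm a b
  have hμ0 : 0 ≤ μ := by
    apply Real.sSup_nonneg
    rintro x ⟨a, b, -, rfl⟩
    positivity
  have hμle : ∀ a b : ZMod N × Fin m, a ≠ b → |colInner D a b| ≤ μ := fun a b hab =>
    le_csSup hbdd ⟨a, b, hab, rfl⟩
  -- pick the index maximizing |v|
  have hne : Nonempty {a // a ∈ T} := ⟨⟨hT.choose, hT.choose_spec⟩⟩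
  obtain ⟨a, ha⟩ := Finite.exists_max (fun b : {a // a ∈ T} => |v b|)
  have hva : 0 < |v a| := by
    by_contra h
    push_neg at h
    apply hv
    funext b
    have := (ha b).trans h
    have : |v b| = 0 := le_antisymm this (abs_nonneg _)
    simpa using this
  -- diagonal entries are 1
  have hdiag : ∀ c : ZMod N × Fin m, colInner D c c = 1 := by
    intro c
    rw [← hnorm c]
    unfold colInner
    exact Finset.sum_congr rfl (fun t _ => (sq (D t c)).symm
    )
  have key : ∑ b : {a // a ∈ T}, colInner D a.1 b.1 * v b = lam * v a := by
    have := congrFun heig a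
    simpa [Matrix.mulVec, dotProduct] using this
  have hsplit : (lam - 1) * v a = ∑ b ∈ Finset.univ.erase a, colInner D a.1 b.1 * v b := by
    have := Finset.add_sum_erase Finset.univ
      (fun b : {a // a ∈ T} => colInner D a.1 b.1 * v b) (Finset.mem_univ a)
    rw [key, hdiag a.1] at this
    linarith
  -- the stripe
  set i := a.1.1 with hi
  set S := stripeSet N n m i with hS
  have haS : a.1 ∈ S := by
    have : ∃ s ∈ Finset.Icc (-(n : ℤ) + 1) ((n : ℤ) - 1), a.1.1 = i + (s : ZMod N) := by
      refine ⟨0, ?_, by simp [hi]⟩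
      rw [Finset.mem_Icc]
      constructor <;> omega
    simpa [hS, stripeSet] using this
  have hcard : (T ∩ S).card ≤ k := by
    rw [← hk]
    exact Finset.le_sup (f := fun i => (T ∩ stripeSet N n m i).card) (Finset.mem_univ i)
  have haTS : a.1 ∈ T ∩ S := Finset.mem_inter.mpr ⟨a.2, haS⟩
  have hk1 : 1 ≤ k := le_trans (Finset.card_pos.mpr ⟨a.1, haTS⟩) hcard
  -- bound the off-diagonal row sum
  have hrow : ∑ b ∈ Finset.univ.erase a, |colInner D a.1 b.1| ≤ ((k : ℝ) - 1) * μ := by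
    set F := (Finset.univ.erase a).filter (fun b : {a // a ∈ T} => b.1 ∈ S) with hF
    have hsum_eq : ∑ b ∈ F, |colInner D a.1 b.1|
        = ∑ b ∈ Finset.univ.erase a, |colInner D a.1 b.1| := by
      apply Finset.sum_filter_of_ne
      intro b _ hb0
      by_contra hbS
      exact hb0 (by rw [colInner_eq_zero_of_not_mem D DL hDL a.1 b.1 hbS]; simp)
    rw [← hsum_eq]
    have hFcard : F.card ≤ k - 1 := by
      have hinj : ∀ b ∈ F, b.1 ∈ (T ∩ S).erase a.1 := by
        intro b hb
        rw [hF, Finset.mem_filter] at hb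
        refine Finset.mem_erase.mpr ⟨?_, Finset.mem_inter.mpr ⟨b.2, hb.2⟩⟩
        intro hbe
        exact (Finset.mem_erase.mp hb.1).1 (Subtype.ext hbe)
      have := Finset.card_le_card_of_injOn (fun b : {a // a ∈ T} => b.1) (fun b hb => hinj b hb)
        (fun x _ y _ hxy => Subtype.ext hxy)
      calc F.card ≤ ((T ∩ S).erase a.1).card := this
        _ = (T ∩ S).card - 1 := Finset.card_erase_of_mem haTS
        _ ≤ k - 1 := by omega
    calc ∑ b ∈ F, |colInner D a.1 b.1| ≤ ∑ _b ∈ F, μ := by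
          apply Finset.sum_le_sum
          intro b hb
          apply hμle
          intro hab
          exact (Finset.mem_erase.mp (Finset.mem_filter.mp hb).1).1 (Subtype.ext hab.symm)
      _ = (F.card : ℝ) * μ := by rw [Finset.sum_const, nsmul_eq_mul]
      _ ≤ ((k : ℝ) - 1) * μ := by
          apply mul_le_mul_of_nonneg_right _ hμ0
          have : (F.card : ℝ) ≤ ((k - 1 : ℕ) : ℝ) := Nat.cast_le.mpr hFcard
          rw [Nat.cast_sub hk1] at this
          simpa using this
  have hmain : |lam - 1| ≤ ((k : ℝ) - 1) * μ := by
    have h1 : |lam - 1| * |v a| ≤ (∑ b ∈ Finset.univ.erase a, |colInner D a.1 b.1|) * |v a| := by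
      rw [← abs_mul, hsplit]
      calc |∑ b ∈ Finset.univ.erase a, colInner D a.1 b.1 * v b|
          ≤ ∑ b ∈ Finset.univ.erase a, |colInner D a.1 b.1 * v b| := Finset.abs_sum_le_sum_abs _ _
        _ ≤ ∑ b ∈ Finset.univ.erase a, |colInner D a.1 b.1| * |v a| := by
            apply Finset.sum_le_sum
            intro b _
            rw [abs_mul]
            exact mul_le_mul_of_nonneg_left (ha b) (abs_nonneg _)
        _ = (∑ b ∈ Finset.univ.erase a, |colInner D a.1 b.1|) * |v a| := by
            rw [Finset.sum_mul]
    have h2 := mul_le_mul_of_nonneg_right hrow (abs_nonneg (v a))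
    exact le_of_mul_le_mul_right (h1.trans h2) hva
  rw [abs_le] at hmain
  constructor <;> linarith [hmain.1, hmain.2]

end
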